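/- Define polynomials S_n(x) by S_0(x) = 1 and S_{n+1}(x) = x(nx+1) S_n(x) + x(1-x²) S_n'(x) (the up-down run polynomials). Then for n ≥ 1, S_{n+1}(x) = (1+x) · Σ_{r=1}^{n} C(n, r-1) (-1)^{n-r} (1-x²)^{⌊(n-r)/2⌋} S_r(x). -/

import Mathlib

open Polynomial Finset

private lemma key (k : ℕ) :
    ((k % 2 : ℕ) : ℝ[X]) * X ^ 2 * (1 - X ^ 2) ^ (k / 2) =
      (1 - X ^ 2) ^ (k / 2) - (1 - X ^ 2) ^ ((k + 1) / 2) := by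
  rcases Nat.even_or_odd k with hk | hk
  · obtain ⟨j, rfl⟩ := hk
    have h1 : (j + j) % 2 = 0 := by omega
    have h2 : (j + j) / 2 = j := by omega
    have h3 : (j + j + 1) / 2 = j := by omega
    rw [h1, h2, h3]; push_cast; ring
  · obtain ⟨j, rfl⟩ := hk
    have h1 : (2 * j + 1) % 2 = 1 := by omega
    have h2 : (2 * j + 1) / 2 = j := by omega
    have h3 : (2 * j + 1 + 1) / 2 = j + 1 := by omega
    rw [h1, h2, h3]; push_cast; ring

private lemma derivA (m : ℕ) :
    X * (1 - X ^ 2) * derivative ((1 - X ^ 2 : ℝ[X]) ^ m) =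
      -(2 * (m : ℝ[X])) * X ^ 2 * (1 - X ^ 2) ^ m := by
  cases m with
  | zero => simp
  | succ j =>
    rw [derivative_pow]
    simp only [derivative_sub, derivative_one, derivative_X_pow]
    simp only [C_eq_natCast]
    push_cast
    ring

private noncomputable def AA (n r : ℕ) : ℝ[X] :=
  (n.choose (r - 1) : ℝ[X]) * (-1 : ℝ[X]) ^ (n - r) * (1 - X ^ 2) ^ ((n - r) / 2)

private lemma derivAA (n r : ℕ) :
    X * (1 - X ^ 2) * derivative (AA n r) =
      -(2 * (((n - r) / 2 : ℕ) : ℝ[X])) * X ^ 2 * AA n r := by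
  unfold AA
  rw [derivative_mul, derivative_mul]
  have h1 : derivative ((n.choose (r - 1) : ℝ[X])) = 0 := derivative_natCast
  have h2 : derivative ((-1 : ℝ[X]) ^ (n - r)) = 0 := by
    rw [derivative_pow]; simp
  rw [h1, h2]
  linear_combination ((n.choose (r - 1) : ℝ[X]) * (-1 : ℝ[X]) ^ (n - r)) * derivA ((n - r) / 2)

private lemma alg_i (n r : ℕ) (h2 : 2 ≤ r) (hrn : r ≤ n) :
    (((n - r) % 2 : ℕ) : ℝ[X]) * X ^ 2 * AA n r + X * AA n r + AA n (r - 1) =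
      AA (n + 1) r + (1 + X) * AA n r := by
  obtain ⟨s, rfl⟩ : ∃ s, r = s + 2 := ⟨r - 2, by omega⟩
  obtain ⟨k, rfl⟩ : ∃ k, n = s + 2 + k := ⟨n - (s + 2), by omega⟩
  unfold AA
  have e1 : s + 2 + k - (s + 2) = k := by omega
  have e2 : s + 2 - 1 = s + 1 := by omega
  have e3 : s + 2 + k - (s + 1) = k + 1 := by omega
  have e4 : s + 1 - 1 = s := by omega
  have e5 : s + 2 + k + 1 - (s + 2) = k + 1 := by omega
  rw [e1, e2, e4, e3, e5]
  have pascal : (s + 2 + k + 1).choose (s + 1) =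
      (s + 2 + k).choose s + (s + 2 + k).choose (s + 1) := Nat.choose_succ_succ _ _
  rw [pascal]
  push_cast
  linear_combination (((s + 2 + k).choose (s + 1) : ℝ[X]) * (-1 : ℝ[X]) ^ k) * key k

private lemma alg_ii (n : ℕ) (hn : 1 ≤ n) :
    (((n - 1) % 2 : ℕ) : ℝ[X]) * X ^ 2 * AA n 1 + X * AA n 1 =
      AA (n + 1) 1 + (1 + X) * AA n 1 := by
  obtain ⟨k, rfl⟩ : ∃ k, n = k + 1 := ⟨n - 1, by omega⟩
  unfold AA
  have e1 : k + 1 - 1 = k := by omega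
  have e2 : (1 : ℕ) - 1 = 0 := rfl
  have e3 : k + 1 + 1 - 1 = k + 1 := by omega
  rw [e1, e2, e3]
  simp only [Nat.choose_zero_right]
  push_cast
  linear_combination ((-1 : ℝ[X]) ^ k) * key k

private lemma stage1 (S : ℕ → ℝ[X])
    (hrec : ∀ n : ℕ, S (n + 1) =
      X * ((n : ℝ[X]) * X + 1) * S n + X * (1 - X ^ 2) * derivative (S n))
    (n r : ℕ) (hrn : r ≤ n) :
    X * (((n : ℝ[X]) + 1) * X + 1) * ((1 + X) * (AA n r * S r)) +
      X * (1 - X ^ 2) * derivative ((1 + X) * (AA n r * S r)) =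
    (1 + X) * (((((n - r) % 2 : ℕ) : ℝ[X]) * X ^ 2 + X) * (AA n r * S r)
      + AA n r * S (r + 1)) := by
  have hd := derivAA n r
  have hs := hrec r
  have hc : (n : ℝ[X]) = (((n - r) % 2 : ℕ) : ℝ[X])
      + 2 * (((n - r) / 2 : ℕ) : ℝ[X]) + (r : ℝ[X]) := by
    have h : n = (n - r) % 2 + 2 * ((n - r) / 2) + r := by omega
    conv_lhs => rw [h]
    push_cast; ring
  rw [derivative_mul, derivative_mul, derivative_add, derivative_one, derivative_X]
  linear_combination ((1 + X) * (S r)) * hd - ((1 + X) * (AA n r)) * hs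
    + ((1 + X) * X ^ 2 * (AA n r) * (S r)) * hc

private lemma conv1 (N : ℕ) (f : ℕ → ℝ[X]) :
    ∑ r ∈ Finset.Icc 1 N, f r = ∑ i ∈ Finset.range N, f (i + 1) := by
  induction N with
  | zero => simp
  | succ N ihN =>
    rw [Finset.sum_Icc_succ_top (by omega), ihN, Finset.sum_range_succ]

private lemma sum_step (S : ℕ → ℝ[X]) (m : ℕ)
    (ih : S (m + 2) = (1 + X) * ∑ r ∈ Finset.Icc 1 (m + 1), AA (m + 1) r * S r) :
    ∑ r ∈ Finset.Icc 1 (m + 1),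
        (((((m + 1 - r) % 2 : ℕ) : ℝ[X]) * X ^ 2 + X) * (AA (m + 1) r * S r)
          + AA (m + 1) r * S (r + 1))
      = ∑ r ∈ Finset.Icc 1 (m + 2), AA (m + 2) r * S r := by
  rw [conv1, conv1, Finset.sum_add_distrib]
  rw [conv1] at ih
  have hL1 : ∑ i ∈ Finset.range (m + 1),
      ((((m + 1 - (i + 1)) % 2 : ℕ) : ℝ[X]) * X ^ 2 + X) * (AA (m + 1) (i + 1) * S (i + 1))
      = ∑ i ∈ Finset.range m,
          ((((m + 1 - (i + 1 + 1)) % 2 : ℕ) : ℝ[X]) * X ^ 2 + X) * (AA (m + 1) (i + 1 + 1) * S (i + 1 + 1))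
        + ((((m + 1 - (0 + 1)) % 2 : ℕ) : ℝ[X]) * X ^ 2 + X) * (AA (m + 1) (0 + 1) * S (0 + 1)) :=
    Finset.sum_range_succ' _ _
  have hL2 : ∑ i ∈ Finset.range (m + 1), AA (m + 1) (i + 1) * S (i + 1 + 1)
      = ∑ i ∈ Finset.range m, AA (m + 1) (i + 1) * S (i + 1 + 1)
        + AA (m + 1) (m + 1) * S (m + 1 + 1) :=
    Finset.sum_range_succ _ _
  have hR : ∑ i ∈ Finset.range (m + 2), AA (m + 2) (i + 1) * S (i + 1)
      = (∑ i ∈ Finset.range m, AA (m + 2) (i + 1 + 1) * S (i + 1 + 1)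
          + AA (m + 2) (0 + 1) * S (0 + 1))
        + AA (m + 2) (m + 1 + 1) * S (m + 1 + 1) := by
    rw [Finset.sum_range_succ, Finset.sum_range_succ']
  have hI : S (m + 2) = ∑ i ∈ Finset.range m, (1 + X) * (AA (m + 1) (i + 1 + 1) * S (i + 1 + 1))
      + (1 + X) * (AA (m + 1) (0 + 1) * S (0 + 1)) := by
    rw [ih, Finset.mul_sum, Finset.sum_range_succ']
  have hT : ∑ i ∈ Finset.range m,
        (((((m + 1 - (i + 1 + 1)) % 2 : ℕ) : ℝ[X]) * X ^ 2 + X) * (AA (m + 1) (i + 1 + 1) * S (i + 1 + 1))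
          + AA (m + 1) (i + 1) * S (i + 1 + 1))
      = ∑ i ∈ Finset.range m,
          (AA (m + 2) (i + 1 + 1) * S (i + 1 + 1)
            + (1 + X) * (AA (m + 1) (i + 1 + 1) * S (i + 1 + 1))) := by
    refine Finset.sum_congr rfl fun i hi => ?_
    have him := Finset.mem_range.mp hi
    have h := alg_i (m + 1) (i + 2) (by omega) (by omega)
    have e : i + 2 - 1 = i + 1 := rfl
    rw [e] at h
    linear_combination (S (i + 2)) * h
  rw [Finset.sum_add_distrib, Finset.sum_add_distrib] at hT
  have hB : ((((m + 1 - (0 + 1)) % 2 : ℕ) : ℝ[X]) * X ^ 2 + X) * (AA (m + 1) (0 + 1) * S (0 + 1))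
      = AA (m + 2) (0 + 1) * S (0 + 1) + (1 + X) * (AA (m + 1) (0 + 1) * S (0 + 1)) := by
    have h := alg_ii (m + 1) (by omega)
    linear_combination (S 1) * h
  have htop : AA (m + 2) (m + 1 + 1) = AA (m + 1) (m + 1) + 1 := by
    unfold AA
    have e1 : m + 2 - (m + 1 + 1) = 0 := by omega
    have e2 : m + 1 + 1 - 1 = m + 1 := rfl
    have e3 : m + 1 - (m + 1) = 0 := by omega
    have e4 : m + 1 - 1 = m := rfl
    rw [e1, e2, e3, e4, Nat.choose_succ_self_right, Nat.choose_succ_self_right]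
    push_cast
    ring
  rw [hL1, hL2, hR]
  linear_combination hT + hB - hI - (S (m + 1 + 1)) * htop

theorem updown_run_recurrence (S : ℕ → Polynomial ℝ) (h0 : S 0 = 1)
    (hrec : ∀ n : ℕ, S (n + 1) =
      X * ((n : Polynomial ℝ) * X + 1) * S n + X * (1 - X ^ 2) * derivative (S n))
    (n : ℕ) (hn : 1 ≤ n) :
    S (n + 1) = (1 + X) * ∑ r ∈ Finset.Icc 1 n,
      (n.choose (r - 1) : Polynomial ℝ) * (-1 : Polynomial ℝ) ^ (n - r) *
        (1 - X ^ 2) ^ ((n - r) / 2) * S r := by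
  have hA : ∀ (m r : ℕ), (m.choose (r - 1) : ℝ[X]) * (-1 : ℝ[X]) ^ (m - r) *
      (1 - X ^ 2) ^ ((m - r) / 2) = AA m r := fun _ _ => rfl
  induction n, hn using Nat.le_induction with
  | base =>
    have h1 : S 1 = X := by
      rw [hrec 0, h0]; simp
    rw [hrec 1, h1, Finset.Icc_self, Finset.sum_singleton]
    simp only [Nat.choose_self, Nat.sub_self]
    push_cast
    simp [h1]
    ring
  | succ n hn ih =>
    simp only [hA] at ih ⊢
    rw [hrec (n + 1), ih]
    have e1 : (1 + X) * ∑ r ∈ Finset.Icc 1 n, AA n r * S r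
        = ∑ r ∈ Finset.Icc 1 n, (1 + X) * (AA n r * S r) := Finset.mul_sum _ _ _
    rw [e1, derivative_sum, Finset.mul_sum, Finset.mul_sum, ← Finset.sum_add_distrib]
    have e2 : ∑ r ∈ Finset.Icc 1 n,
        (X * ((↑(n + 1) : ℝ[X]) * X + 1) * ((1 + X) * (AA n r * S r)) +
          X * (1 - X ^ 2) * derivative ((1 + X) * (AA n r * S r)))
        = ∑ r ∈ Finset.Icc 1 n, (1 + X) *
            (((((n - r) % 2 : ℕ) : ℝ[X]) * X ^ 2 + X) * (AA n r * S r)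
              + AA n r * S (r + 1)) := by
      refine Finset.sum_congr rfl fun r hr => ?_
      have hrn : r ≤ n := (Finset.mem_Icc.mp hr).2
      have := stage1 S hrec n r hrn
      push_cast
      push_cast at this
      exact this
    rw [e2, ← Finset.mul_sum]
    refine congrArg _ ?_
    obtain ⟨m, rfl⟩ : ∃ m, n = m + 1 := ⟨n - 1, by omega⟩
    exact sum_step S m ih
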